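/- (Average-iterate CCE for non-stationary multi-player general-sum matrix games, Appendix D.2.) Let m, T be positive integers, A_1,…,A_m finite nonempty action sets, and for each t ∈ {1,…,T} and player i let r_i^t : A_1 × ⋯ × A_m → [0,1] be reward functions. Let π^t = π_1^t ⊗ ⋯ ⊗ π_m^t be product distributions with π_i^t ∈ Δ(A_i), and Δ, ρ_1,…,ρ_m ≥ 0. Suppose Σ_{t=1}^{T−1} max_{i} max_{a} |r_i^{t+1}(a) − r_i^t(a)| ≤ Δ, and for each player i, max_{a'_i ∈ A_i} (1/T) Σ_{t=1}^T E_{a_{-i} ∼ π^t_{-i}}[ r_i^t(a'_i, a_{-i}) ] − (1/T) Σ_{t=1}^T E_{a ∼ π^t}[ r_i^t(a) ] ≤ ρ_i. Then the averaged joint distribution π̄ = (1/T) Σ_{t=1}^T π^t satisfies, for every player i, max_{a'_i ∈ A_i} E_{a ∼ π̄}[ r_i^T(a'_i, a_{-i}) ] − E_{a ∼ π̄}[ r_i^T(a) ] ≤ ρ_i + 2Δ. -/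
import Mathlib


open Finset

/-- (Average-iterate CCE for non-stationary multi-player general-sum matrix games,
Appendix D.2.) If each player i runs a no-external-regret algorithm producing product
distributions π^t = ⊗_i π_i^t for the non-stationary rewards r^t with total variation at
most Δ, then the averaged joint distribution π̄ = (1/T)Σ_t π^t has CCE gap at most
ρ_i + 2Δ for each player i in the final game r^T. -/
theorem stmt_6 (m T : ℕ) (hm : 0 < m) (hT : 0 < T)
    (A : Fin m → Type*) [∀ i, Fintype (A i)] [∀ i, Nonempty (A i)] [∀ i, DecidableEq (A i)]
    (r : ℕ → (i : Fin m) → ((j : Fin m) → A j) → ℝ)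
    (hr : ∀ t ∈ Finset.Icc 1 T, ∀ i a, r t i a ∈ Set.Icc (0 : ℝ) 1)
    (π : ℕ → (i : Fin m) → A i → ℝ)
    (hπ0 : ∀ t ∈ Finset.Icc 1 T, ∀ i a, 0 ≤ π t i a)
    (hπ1 : ∀ t ∈ Finset.Icc 1 T, ∀ i, ∑ a, π t i a = 1)
    (Δ : ℝ) (hΔ : 0 ≤ Δ) (ρ : Fin m → ℝ) (hρ : ∀ i, 0 ≤ ρ i)
    (hvar : ∑ t ∈ Finset.Icc 1 (T - 1),
        (Finset.univ : Finset (Fin m × ((j : Fin m) → A j))).sup'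
          (by have : Nonempty (Fin m) := ⟨⟨0, hm⟩⟩
              exact Finset.univ_nonempty)
          (fun p => |r (t + 1) p.1 p.2 - r t p.1 p.2|) ≤ Δ)
    (hreg : ∀ i,
        (Finset.univ : Finset (A i)).sup' Finset.univ_nonempty (fun a' =>
          (1 / (T : ℝ)) * ∑ t ∈ Finset.Icc 1 T, ∑ a : (j : Fin m) → A j,
            (∏ j, π t j (a j)) * r t i (Function.update a i a'))
        - (1 / (T : ℝ)) * ∑ t ∈ Finset.Icc 1 T, ∑ a : (j : Fin m) → A j,
            (∏ j, π t j (a j)) * r t i a ≤ ρ i) :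
    ∀ i,
      (Finset.univ : Finset (A i)).sup' Finset.univ_nonempty (fun a' =>
        ∑ a : (j : Fin m) → A j,
          ((1 / (T : ℝ)) * ∑ t ∈ Finset.Icc 1 T, ∏ j, π t j (a j))
            * r T i (Function.update a i a'))
      - ∑ a : (j : Fin m) → A j,
          ((1 / (T : ℝ)) * ∑ t ∈ Finset.Icc 1 T, ∏ j, π t j (a j)) * r T i a
      ≤ ρ i + 2 * Δ := by
  intro i
  have hTpos : (0:ℝ) < T := by exact_mod_cast hT
  -- step bound
  have hstep : ∀ t ∈ Finset.Icc 1 T, ∀ (k : Fin m) (a : (j : Fin m) → A j),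
      |r T k a - r t k a| ≤ Δ := by
    intro t ht k a
    obtain ⟨ht1, htT⟩ := Finset.mem_Icc.mp ht
    have htel : r T k a - r t k a = ∑ s ∈ Finset.Ico t T, (r (s+1) k a - r s k a) := by
      rw [Finset.sum_Ico_eq_sub _ htT, Finset.sum_range_sub (fun s => r s k a),
        Finset.sum_range_sub (fun s => r s k a)]
      ring
    have hsub : Finset.Ico t T ⊆ Finset.Icc 1 (T - 1) := by
      intro s hs
      obtain ⟨h1, h2⟩ := Finset.mem_Ico.mp hs
      exact Finset.mem_Icc.mpr ⟨le_trans ht1 h1, Nat.le_sub_one_of_lt h2⟩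
    calc |r T k a - r t k a| = |∑ s ∈ Finset.Ico t T, (r (s+1) k a - r s k a)| := by rw [htel]
      _ ≤ ∑ s ∈ Finset.Ico t T, |r (s+1) k a - r s k a| := Finset.abs_sum_le_sum_abs _ _
      _ ≤ ∑ s ∈ Finset.Icc 1 (T-1), |r (s+1) k a - r s k a| :=
          Finset.sum_le_sum_of_subset_of_nonneg hsub (fun _ _ _ => abs_nonneg _)
      _ ≤ ∑ s ∈ Finset.Icc 1 (T-1),
          (Finset.univ : Finset (Fin m × ((j : Fin m) → A j))).sup'
            (by have : Nonempty (Fin m) := ⟨⟨0, hm⟩⟩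
                exact Finset.univ_nonempty)
            (fun p => |r (s + 1) p.1 p.2 - r s p.1 p.2|) :=
          Finset.sum_le_sum (fun s _ => Finset.le_sup'
            (fun p => |r (s + 1) p.1 p.2 - r s p.1 p.2|) (Finset.mem_univ (k, a)))
      _ ≤ Δ := hvar
  set P : ℕ → ((j : Fin m) → A j) → ℝ := fun t a => ∏ j, π t j (a j) with hP
  have hP0 : ∀ t ∈ Finset.Icc 1 T, ∀ a, 0 ≤ P t a :=
    fun t ht a => Finset.prod_nonneg fun j _ => hπ0 t ht j (a j)
  have hP1 : ∀ t ∈ Finset.Icc 1 T, ∑ a : (j : Fin m) → A j, P t a = 1 := by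
    intro t ht
    have h := Finset.prod_univ_sum (fun j => (Finset.univ : Finset (A j)))
      (fun j a => π t j a)
    rw [Fintype.piFinset_univ] at h
    simp only [hπ1 t ht, Finset.prod_const_one] at h
    exact h.symm
  -- swap sums
  have hswap : ∀ R : ((j : Fin m) → A j) → ℝ,
      ∑ a : (j : Fin m) → A j, ((1 / (T : ℝ)) * ∑ t ∈ Finset.Icc 1 T, P t a) * R a
      = (1 / (T : ℝ)) * ∑ t ∈ Finset.Icc 1 T, ∑ a : (j : Fin m) → A j, P t a * R a := by
    intro R
    calc ∑ a : (j : Fin m) → A j, ((1 / (T : ℝ)) * ∑ t ∈ Finset.Icc 1 T, P t a) * R a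
        = (1 / (T : ℝ)) * ∑ a : (j : Fin m) → A j, ∑ t ∈ Finset.Icc 1 T, P t a * R a := by
          rw [Finset.mul_sum]
          exact Finset.sum_congr rfl fun a _ => by rw [mul_assoc, Finset.sum_mul]
      _ = (1 / (T : ℝ)) * ∑ t ∈ Finset.Icc 1 T, ∑ a : (j : Fin m) → A j, P t a * R a := by
          rw [Finset.sum_comm]
  -- difference bound for any family of points
  have hdiff : ∀ b : ((j : Fin m) → A j) → ((j : Fin m) → A j),
      |∑ a : (j : Fin m) → A j, ((1 / (T : ℝ)) * ∑ t ∈ Finset.Icc 1 T, P t a) * r T i (b a)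
        - (1 / (T : ℝ)) * ∑ t ∈ Finset.Icc 1 T, ∑ a : (j : Fin m) → A j, P t a * r t i (b a)|
        ≤ Δ := by
    intro b
    rw [hswap (fun a => r T i (b a)), ← mul_sub, ← Finset.sum_sub_distrib]
    rw [abs_mul]
    have h1 : |(1 / (T : ℝ))| = 1 / (T : ℝ) := abs_of_pos (by positivity)
    rw [h1]
    have h2 : |∑ t ∈ Finset.Icc 1 T, (∑ a : (j : Fin m) → A j, P t a * r T i (b a)
        - ∑ a : (j : Fin m) → A j, P t a * r t i (b a))| ≤ (T : ℝ) * Δ := by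
      calc _ ≤ ∑ t ∈ Finset.Icc 1 T, |∑ a : (j : Fin m) → A j, P t a * r T i (b a)
            - ∑ a : (j : Fin m) → A j, P t a * r t i (b a)| := Finset.abs_sum_le_sum_abs _ _
        _ ≤ ∑ t ∈ Finset.Icc 1 T, Δ := by
            refine Finset.sum_le_sum fun t ht => ?_
            rw [← Finset.sum_sub_distrib]
            calc |∑ a : (j : Fin m) → A j, (P t a * r T i (b a) - P t a * r t i (b a))|
                ≤ ∑ a : (j : Fin m) → A j, |P t a * r T i (b a) - P t a * r t i (b a)| :=
                  Finset.abs_sum_le_sum_abs _ _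
              _ ≤ ∑ a : (j : Fin m) → A j, P t a * Δ := by
                  refine Finset.sum_le_sum fun a _ => ?_
                  rw [← mul_sub, abs_mul, abs_of_nonneg (hP0 t ht a)]
                  exact mul_le_mul_of_nonneg_left (hstep t ht i (b a)) (hP0 t ht a)
              _ = Δ := by rw [← Finset.sum_mul, hP1 t ht, one_mul]
        _ = (T : ℝ) * Δ := by rw [Finset.sum_const, Nat.card_Icc]; simp [nsmul_eq_mul]
    calc (1 / (T : ℝ)) * |∑ t ∈ Finset.Icc 1 T, (∑ a : (j : Fin m) → A j, P t a * r T i (b a)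
          - ∑ a : (j : Fin m) → A j, P t a * r t i (b a))|
        ≤ (1 / (T : ℝ)) * ((T : ℝ) * Δ) := by
          exact mul_le_mul_of_nonneg_left h2 (by positivity)
      _ = Δ := by field_simp
  have hsup : (Finset.univ : Finset (A i)).sup' Finset.univ_nonempty (fun a' =>
      ∑ a : (j : Fin m) → A j,
        ((1 / (T : ℝ)) * ∑ t ∈ Finset.Icc 1 T, P t a) * r T i (Function.update a i a'))
      ≤ (Finset.univ : Finset (A i)).sup' Finset.univ_nonempty (fun a' =>
        (1 / (T : ℝ)) * ∑ t ∈ Finset.Icc 1 T, ∑ a : (j : Fin m) → A j,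
          P t a * r t i (Function.update a i a')) + Δ := by
    refine Finset.sup'_le _ _ fun a' _ => ?_
    have h := abs_le.mp (hdiff (fun a => Function.update a i a')) |>.2
    have h3 := Finset.le_sup' (fun a' =>
      (1 / (T : ℝ)) * ∑ t ∈ Finset.Icc 1 T, ∑ a : (j : Fin m) → A j,
        P t a * r t i (Function.update a i a')) (Finset.mem_univ a')
    linarith
  have hS := abs_le.mp (hdiff id) |>.1
  simp only [id] at hS
  have := hreg i
  simp only [hP] at *
  linarith [hsup, hS, this]
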